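/- Let X₃⁺ be the vector field with components (X₃⁺)₁(w,z) = -(i/4) Σ_{j,k≠0, |k|=|j|} w_j w_{-j} |j|² z_k e^{ik·x} and (X₃⁺)₂(w,z) = (i/4) Σ_{j,k≠0, |k|=|j|} z_j z_{-j} |j|² w_k e^{ik·x}. Then for every s ≥ 0 and every pair (w,z) of zero-mean functions, ⟨Λ^s (X₃⁺)₁(w,z), Λ^s z⟩ + ⟨Λ^s w, Λ^s (X₃⁺)₂(w,z)⟩ = 0, where ⟨f,g⟩ = Σ_j f_j g_{-j}. -/

import Mathlib

open scoped BigOperators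

/-- Euclidean norm of a vector in `ℤ^d`. -/
noncomputable def enormZ {d : ℕ} (k : Fin d → ℤ) : ℝ :=
  Real.sqrt (∑ i, ((k i : ℝ)) ^ 2)

/-- The bilinear pairing `⟨f,g⟩ = Σ_j f_j g_{-j}`. -/
noncomputable def pairing {d : ℕ} (f g : (Fin d → ℤ) →₀ ℂ) : ℂ :=
  ∑ j ∈ f.support, f j * g (-j)

/-- The Fourier multiplier `Λ^s : h_k ↦ |k|^s h_k`. -/
noncomputable def lam {d : ℕ} (s : ℝ) (h : (Fin d → ℤ) →₀ ℂ) : (Fin d → ℤ) →₀ ℂ :=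
  Finsupp.onFinset h.support
    (fun k => (((enormZ k ^ s) : ℝ) : ℂ) * h k)
    (fun k hk => Finsupp.mem_support_iff.2 fun h0 => hk (by simp [h0]))

/-- First component of `X₃⁺`:
`(X₃⁺)₁(w,z)_k = -(i/4) (Σ_{j : |j|=|k|} w_j w_{-j} |j|²) z_k`. -/
noncomputable def X3p1 {d : ℕ} (w z : (Fin d → ℤ) →₀ ℂ) : (Fin d → ℤ) →₀ ℂ :=
  Finsupp.onFinset z.support
    (fun k => (-(Complex.I) / 4) *
      (∑ j ∈ w.support,
        if enormZ j = enormZ k then w j * w (-j) * (((enormZ j ^ 2) : ℝ) : ℂ) else 0) * z k)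
    (fun k hk => Finsupp.mem_support_iff.2 fun h0 => hk (by simp [h0]))

/-- Second component of `X₃⁺`:
`(X₃⁺)₂(w,z)_k = (i/4) (Σ_{j : |j|=|k|} z_j z_{-j} |j|²) w_k`. -/
noncomputable def X3p2 {d : ℕ} (w z : (Fin d → ℤ) →₀ ℂ) : (Fin d → ℤ) →₀ ℂ :=
  Finsupp.onFinset w.support
    (fun k => (Complex.I / 4) *
      (∑ j ∈ z.support,
        if enormZ j = enormZ k then z j * z (-j) * (((enormZ j ^ 2) : ℝ) : ℂ) else 0) * w k)
    (fun k hk => Finsupp.mem_support_iff.2 fun h0 => hk (by simp [h0]))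


lemma enorm_neg' {d : ℕ} (k : Fin d → ℤ) : enormZ (-k) = enormZ k := by
  unfold enormZ
  congr 1
  refine Finset.sum_congr rfl fun i _ => ?_
  simp

lemma pairing_eq_sum {d : ℕ} (f g : (Fin d → ℤ) →₀ ℂ) (T : Finset (Fin d → ℤ))
    (h : f.support ⊆ T) : pairing f g = ∑ j ∈ T, f j * g (-j) := by
  unfold pairing
  refine Finset.sum_subset h fun x _ hx => ?_
  simp [Finsupp.notMem_support_iff.mp hx]

theorem stmt14 {d : ℕ} (w z : (Fin d → ℤ) →₀ ℂ) (hw : w 0 = 0) (hz : z 0 = 0) :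
    ∀ s : ℝ, 0 ≤ s →
      pairing (lam s (X3p1 w z)) (lam s z) + pairing (lam s w) (lam s (X3p2 w z)) = 0 := by
  intro s hs
  have hsupp1 : (lam s (X3p1 w z)).support ⊆ z.support := fun k hk =>
    Finsupp.support_onFinset_subset (Finsupp.support_onFinset_subset hk)
  have hsupp2 : (lam s w).support ⊆ w.support := fun k hk =>
    Finsupp.support_onFinset_subset hk
  rw [pairing_eq_sum _ _ z.support hsupp1, pairing_eq_sum _ _ w.support hsupp2]
  simp only [lam, X3p1, X3p2, Finsupp.onFinset_apply, enorm_neg']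
  simp only [Finset.mul_sum, Finset.sum_mul, mul_ite, ite_mul, mul_zero, zero_mul]
  rw [Finset.sum_comm (s := w.support) (t := z.support)]
  rw [← Finset.sum_add_distrib]
  refine Finset.sum_eq_zero fun a ha => ?_
  rw [← Finset.sum_add_distrib]
  refine Finset.sum_eq_zero fun b hb => ?_
  by_cases h : enormZ a = enormZ b
  · rw [if_pos h.symm, if_pos h, h]
    ring
  · rw [if_neg (fun hh => h hh.symm), if_neg h]
    simp
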